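/- Let G = (V, E) be a finite simple graph with nonnegative edge costs ℓ : E → ℝ. Let C ⊆ E be a tour and let v₁, v₂, v₃, v₄ ∈ V(C) be four distinct vertices such that all six edges e₁₂, e₁₃, e₁₄, e₂₃, e₂₄, e₃₄ connecting them belong to E, with ℓ(e₁₂) + ℓ(e₃₄) > ℓ(e₁₃) + ℓ(e₂₄) and ℓ(e₁₂) + ℓ(e₃₄) > ℓ(e₂₃) + ℓ(e₁₄). If e₁₂ ∈ C and e₃₄ ∈ C, then there exists a tour C' with V(C') = V(C), with cost(C') < cost(C), not containing both e₁₂ and e₃₄, and such that C ∖ {e₁₂, e₁₃, e₁₄, e₂₃, e₂₄, e₃₄} = C' ∖ {e₁₂, e₁₃, e₁₄, e₂₃, e₂₄, e₃₄}. -/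

import Mathlib

variable {V : Type*} [Fintype V] [DecidableEq V]

/-- The set of endpoints of the edges of an edge set `C` (the vertices "visited" by `C`). -/
def edgeVerts (C : Finset (Sym2 V)) : Finset V :=
  Finset.univ.filter (fun v => ∃ e ∈ C, v ∈ e)

/-- Two vertices are connected in an edge set `C` if there is a path between them
using only edges of `C`. -/
def ConnIn (C : Finset (Sym2 V)) (u w : V) : Prop :=
  (SimpleGraph.fromEdgeSet (↑C : Set (Sym2 V))).Reachable u w

/-- A tour: an edge set `C ⊆ E(G)` whose induced subgraph is connected and in which every
vertex of `V(C)` has degree exactly `2`. -/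
def IsTour (G : SimpleGraph V) (C : Finset (Sym2 V)) : Prop :=
  (↑C : Set (Sym2 V)) ⊆ G.edgeSet ∧
  (∀ u ∈ edgeVerts C, ∀ w ∈ edgeVerts C, ConnIn C u w) ∧
  (∀ v ∈ edgeVerts C, (C.filter (fun e => v ∈ e)).card = 2)

open SimpleGraph Finset
set_option linter.unusedSectionVars false

lemma mem_edgeVerts' {C : Finset (Sym2 V)} {v : V} : v ∈ edgeVerts C ↔ ∃ e ∈ C, v ∈ e := by
  simp [edgeVerts]

lemma connIn_symm {C : Finset (Sym2 V)} {u w : V} (h : ConnIn C u w) : ConnIn C w u :=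
  Reachable.symm h

lemma connIn_trans {C : Finset (Sym2 V)} {u w x : V} (h : ConnIn C u w) (h' : ConnIn C w x) :
    ConnIn C u x := Reachable.trans h h'

lemma connIn_of_mem {C : Finset (Sym2 V)} {u w : V} (h : s(u,w) ∈ C) (hne : u ≠ w) :
    ConnIn C u w := by
  exact ((SimpleGraph.fromEdgeSet_adj _).mpr ⟨by exact_mod_cast h, hne⟩).reachable

lemma connIn_mono {C D : Finset (Sym2 V)} (h : C ⊆ D) {u w : V} (hr : ConnIn C u w) :
    ConnIn D u w :=
  Reachable.mono (SimpleGraph.fromEdgeSet_mono (by exact_mod_cast h)) hr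

lemma reach_closed {H : SimpleGraph V} {S : Set V}
    (hS : ∀ a b, a ∈ S → H.Adj a b → b ∈ S) :
    ∀ {x y : V}, H.Reachable x y → x ∈ S → y ∈ S := by
  intro x y h hx
  obtain ⟨w⟩ := h
  induction w with
  | nil => exact hx
  | cons h p ih => exact ih (hS _ _ hx h) -- may need hx generalized

lemma reach_aux {A B : Finset (Sym2 V)} {T : Finset V}
    (hT : ∀ e ∈ A, e ∉ B → ∀ x ∈ e, x ∈ T) {x y : V}
    (h : ConnIn A x y) :
    ConnIn B x y ∨ ∃ t ∈ T, ConnIn B x t := by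
  obtain ⟨w⟩ := h
  induction w with
  | nil => exact Or.inl (Reachable.refl _)
  | @cons a b c h p ih =>
    rw [SimpleGraph.fromEdgeSet_adj] at h
    by_cases hB : s(a,b) ∈ B
    · have hab : ConnIn B a b := connIn_of_mem hB h.2
      rcases ih with h' | ⟨t, ht, h'⟩
      · exact Or.inl (connIn_trans hab h')
      · exact Or.inr ⟨t, ht, connIn_trans hab h'⟩
    · exact Or.inr ⟨a, hT _ (by exact_mod_cast h.1) hB a (by simp), Reachable.refl _⟩

lemma helper1 {D : Finset (Sym2 V)} {u w : V}
    (p : (SimpleGraph.fromEdgeSet (↑D : Set (Sym2 V))).Walk u w) :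
    ∀ {b : V}, b ∈ p.support → b ≠ u →
      ∃ a ∈ p.support, a ≠ b ∧ s(a, b) ∈ D := by
  induction p with
  | nil =>
    intro b hb hbu
    simp only [SimpleGraph.Walk.support_nil, List.mem_singleton] at hb
    exact absurd hb hbu
  | @cons x c y h q ih =>
    intro b hb hbu
    rw [SimpleGraph.Walk.support_cons, List.mem_cons] at hb
    rcases hb with rfl | hb
    · exact absurd rfl hbu
    by_cases hbc : b = c
    · subst hbc
      refine ⟨x, by simp, ((SimpleGraph.fromEdgeSet_adj _).mp h).2, ?_⟩
      exact_mod_cast ((SimpleGraph.fromEdgeSet_adj _).mp h).1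
    · obtain ⟨a, ha, hab, he⟩ := ih hb hbc
      exact ⟨a, by simp [SimpleGraph.Walk.support_cons, ha], hab, he⟩

lemma helper2 {D : Finset (Sym2 V)} {u w : V}
    (p : (SimpleGraph.fromEdgeSet (↑D : Set (Sym2 V))).Walk u w) (hp : p.IsPath) :
    ∀ {b : V}, b ∈ p.support → b ≠ u → b ≠ w →
      ∃ a₁ a₂, a₁ ≠ a₂ ∧ a₁ ∈ p.support ∧ a₂ ∈ p.support ∧ a₁ ≠ b ∧ a₂ ≠ b ∧
        s(a₁, b) ∈ D ∧ s(a₂, b) ∈ D := by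
  induction p with
  | nil =>
    intro b hb hbu _
    simp only [SimpleGraph.Walk.support_nil, List.mem_singleton] at hb
    exact absurd hb hbu
  | @cons x c y h q ih =>
    intro b hb hbu hbw
    rw [SimpleGraph.Walk.cons_isPath_iff] at hp
    rw [SimpleGraph.Walk.support_cons, List.mem_cons] at hb
    rcases hb with rfl | hb
    · exact absurd rfl hbu
    by_cases hbc : b = c
    · subst hbc
      cases q with
      | nil => exact absurd rfl hbw
      | @cons c d y h' q' =>
        refine ⟨x, d, ?_, by simp, ?_, ((SimpleGraph.fromEdgeSet_adj _).mp h).2, ?_, ?_, ?_⟩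
        · rintro rfl
          exact hp.2 (by simp [SimpleGraph.Walk.support_cons])
        · simp [SimpleGraph.Walk.support_cons]
        · exact fun hdb => ((SimpleGraph.fromEdgeSet_adj _).mp h').2 hdb.symm
        · exact_mod_cast ((SimpleGraph.fromEdgeSet_adj _).mp h).1
        · have := ((SimpleGraph.fromEdgeSet_adj _).mp h').1
          rw [Sym2.eq_swap] at this
          exact_mod_cast this
    · obtain ⟨a₁, a₂, h1, h2, h3, h4, h5, h6, h7⟩ := ih hp.1 hb hbc hbw
      exact ⟨a₁, a₂, h1, by simp [SimpleGraph.Walk.support_cons, h2],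
        by simp [SimpleGraph.Walk.support_cons, h3], h4, h5, h6, h7⟩

lemma deg_eq (F : Finset (Sym2 V)) (hF : ∀ e ∈ F, ¬ e.IsDiag) (v : V)
    [h : Fintype ((SimpleGraph.fromEdgeSet (↑F : Set (Sym2 V))).neighborSet v)] :
    (SimpleGraph.fromEdgeSet (↑F : Set (Sym2 V))).degree v
      = (F.filter (fun e => v ∈ e)).card := by
  classical
  rw [SimpleGraph.degree]
  apply Finset.card_nbij (fun a => s(v, a))
  · intro a ha
    rw [Finset.mem_coe, SimpleGraph.mem_neighborFinset, SimpleGraph.fromEdgeSet_adj] at ha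
    simp only [Finset.mem_coe, Finset.mem_filter]
    exact ⟨by exact_mod_cast ha.1, by simp⟩
  · intro a ha b hb hab
    rw [Finset.mem_coe, SimpleGraph.mem_neighborFinset, SimpleGraph.fromEdgeSet_adj] at ha hb
    rcases Sym2.eq_iff.mp hab with ⟨_, h2⟩ | ⟨h1, h2⟩
    · exact h2
    · exact h2.trans h1
  · intro e he
    simp only [Finset.coe_filter, Set.mem_setOf_eq] at he
    obtain ⟨a, rfl⟩ := Sym2.mem_iff_exists.mp he.2
    refine ⟨a, ?_, rfl⟩
    rw [Finset.mem_coe, SimpleGraph.mem_neighborFinset, SimpleGraph.fromEdgeSet_adj]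
    refine ⟨by exact_mod_cast he.1, ?_⟩
    intro hva
    exact hF _ he.1 (by rw [← hva] at *; exact Sym2.mk_isDiag_iff.mpr rfl)

lemma degD (C : Finset (Sym2 V)) (e f : Sym2 V) (v : V) (he : e ∈ C) (hv : v ∈ e)
    (hvf : v ∉ f) (hcard : (C.filter (fun e' => v ∈ e')).card = 2) :
    ((C \ {e, f}).filter (fun e' => v ∈ e')).card = 1 := by
  have hset : (C \ {e, f}).filter (fun e' => v ∈ e')
      = (C.filter (fun e' => v ∈ e')).erase e := by
    ext a
    simp only [Finset.mem_filter, Finset.mem_sdiff, Finset.mem_insert, Finset.mem_singleton,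
      Finset.mem_erase]
    constructor
    · rintro ⟨⟨ha, hnot⟩, hva⟩
      exact ⟨fun h => hnot (Or.inl h), ha, hva⟩
    · rintro ⟨hne, ha, hva⟩
      refine ⟨⟨ha, ?_⟩, hva⟩
      rintro (rfl | rfl)
      · exact hne rfl
      · exact hvf hva
  rw [hset, Finset.card_erase_of_mem (Finset.mem_filter.mpr ⟨he, hv⟩), hcard]

lemma degD_other (C : Finset (Sym2 V)) (e f : Sym2 V) (v : V) (hve : v ∉ e) (hvf : v ∉ f) :
    ((C \ {e, f}).filter (fun e' => v ∈ e')) = C.filter (fun e' => v ∈ e') := by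
  ext a
  simp only [Finset.mem_filter, Finset.mem_sdiff, Finset.mem_insert, Finset.mem_singleton]
  constructor
  · rintro ⟨⟨ha, _⟩, hva⟩; exact ⟨ha, hva⟩
  · rintro ⟨ha, hva⟩
    refine ⟨⟨ha, ?_⟩, hva⟩
    rintro (rfl | rfl)
    · exact hve hva
    · exact hvf hva

lemma no_link {C D : Finset (Sym2 V)} {v1 v2 v3 : V}
    (hD : D ⊆ C)
    (hdeg2 : ∀ v ∈ edgeVerts C, (C.filter (fun e => v ∈ e)).card = 2)
    (hconn : ∀ u ∈ edgeVerts C, ∀ w ∈ edgeVerts C, ConnIn C u w)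
    (hv1 : v1 ∈ edgeVerts C) (hv2 : v2 ∈ edgeVerts C) (hv3 : v3 ∈ edgeVerts C)
    (h12 : v1 ≠ v2) (h31 : v3 ≠ v1) (h32 : v3 ≠ v2)
    (he12C : s(v1, v2) ∈ C) (he12D : s(v1, v2) ∉ D)
    (hdegD3 : (D.filter (fun e => v3 ∈ e)).card ≤ 1) :
    ¬ ConnIn D v1 v2 := by
  intro hr
  obtain ⟨w⟩ := hr
  set p := w.bypass with hpdef
  have hp : p.IsPath := SimpleGraph.Walk.bypass_isPath w
  -- The key claim: for each b in the support, all C-edges at b have both endpoints in support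
  have Sub : ∀ b ∈ p.support, ∃ f1 f2 : Sym2 V, f1 ≠ f2 ∧ f1 ∈ C ∧ f2 ∈ C ∧ b ∈ f1 ∧ b ∈ f2 ∧
      (∀ x ∈ f1, x ∈ p.support) ∧ (∀ x ∈ f2, x ∈ p.support) := by
    intro b hb
    by_cases hb1 : b = v1
    · subst hb1
      obtain ⟨a, ha, hab, he⟩ := helper1 p.reverse
        (by rw [SimpleGraph.Walk.support_reverse]; simpa using hb) h12
      rw [SimpleGraph.Walk.support_reverse, List.mem_reverse] at ha
      refine ⟨s(b, v2), s(a, b), ?_, he12C, hD he, by simp, by simp, ?_, ?_⟩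
      · intro hEq; rw [← hEq] at he; exact he12D he
      · intro x hx
        rcases Sym2.mem_iff.mp hx with rfl | rfl
        · exact hb
        · exact SimpleGraph.Walk.end_mem_support p
      · intro x hx
        rcases Sym2.mem_iff.mp hx with rfl | rfl
        · exact ha
        · exact hb
    by_cases hb2 : b = v2
    · subst hb2
      obtain ⟨a, ha, hab, he⟩ := helper1 p hb hb1
      refine ⟨s(v1, b), s(a, b), ?_, he12C, hD he, by simp, by simp, ?_, ?_⟩
      · intro hEq; rw [← hEq] at he; exact he12D he
      · intro x hx
        rcases Sym2.mem_iff.mp hx with rfl | rfl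
        · exact SimpleGraph.Walk.start_mem_support p
        · exact hb
      · intro x hx
        rcases Sym2.mem_iff.mp hx with rfl | rfl
        · exact ha
        · exact hb
    · obtain ⟨a₁, a₂, hne, ha1, ha2, hb1', hb2', he1, he2⟩ := helper2 p hp hb hb1 hb2
      refine ⟨s(a₁, b), s(a₂, b), ?_, hD he1, hD he2, by simp, by simp, ?_, ?_⟩
      · intro hEq
        rcases Sym2.eq_iff.mp hEq with ⟨h1, _⟩ | ⟨h1, _⟩
        · exact hne h1
        · exact hb1' h1
      · intro x hx
        rcases Sym2.mem_iff.mp hx with rfl | rfl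
        · exact ha1
        · exact hb
      · intro x hx
        rcases Sym2.mem_iff.mp hx with rfl | rfl
        · exact ha2
        · exact hb
  have closure : ∀ a b : V, a ∈ {x | x ∈ p.support} →
      (SimpleGraph.fromEdgeSet (↑C : Set (Sym2 V))).Adj a b → b ∈ {x | x ∈ p.support} := by
    intro b a hb hadj
    rw [SimpleGraph.fromEdgeSet_adj] at hadj
    obtain ⟨f1, f2, hne, hf1C, hf2C, hbf1, hbf2, hf1S, hf2S⟩ := Sub b hb
    have hbEV : b ∈ edgeVerts C := mem_edgeVerts'.mpr ⟨f1, hf1C, hbf1⟩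
    have hsub : ({f1, f2} : Finset (Sym2 V)) ⊆ C.filter (fun e => b ∈ e) := by
      intro g hg
      rcases Finset.mem_insert.mp hg with rfl | hg
      · exact Finset.mem_filter.mpr ⟨hf1C, hbf1⟩
      · rw [Finset.mem_singleton] at hg; subst hg
        exact Finset.mem_filter.mpr ⟨hf2C, hbf2⟩
    have heqf : ({f1, f2} : Finset (Sym2 V)) = C.filter (fun e => b ∈ e) :=
      Finset.eq_of_subset_of_card_le hsub
        (by rw [hdeg2 b hbEV, Finset.card_pair hne])
    have hmem : s(b, a) ∈ ({f1, f2} : Finset (Sym2 V)) := by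
      rw [heqf]
      exact Finset.mem_filter.mpr ⟨by exact_mod_cast hadj.1, by simp⟩
    rcases Finset.mem_insert.mp hmem with hg | hg
    · exact hf1S a (by rw [← hg]; simp)
    · rw [Finset.mem_singleton] at hg
      exact hf2S a (by rw [← hg]; simp)
  have hv3S : v3 ∈ {x | x ∈ p.support} :=
    reach_closed closure (hconn v1 hv1 v3 hv3) (SimpleGraph.Walk.start_mem_support p)
  obtain ⟨a₁, a₂, hne, _, _, hb1', hb2', he1, he2⟩ := helper2 p hp hv3S h31 h32
  have hsub2 : ({s(a₁, v3), s(a₂, v3)} : Finset (Sym2 V)) ⊆ D.filter (fun e => v3 ∈ e) := by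
    intro g hg
    rcases Finset.mem_insert.mp hg with rfl | hg
    · exact Finset.mem_filter.mpr ⟨he1, by simp⟩
    · rw [Finset.mem_singleton] at hg; subst hg
      exact Finset.mem_filter.mpr ⟨he2, by simp⟩
  have : (2 : ℕ) ≤ (D.filter (fun e => v3 ∈ e)).card := by
    rw [← Finset.card_pair (show s(a₁, v3) ≠ s(a₂, v3) from ?_)]
    · exact Finset.card_le_card hsub2
    · intro hEq
      rcases Sym2.eq_iff.mp hEq with ⟨h1, _⟩ | ⟨h1, _⟩
      · exact hne h1
      · exact hb1' h1
  omega

lemma pair_up {D : Finset (Sym2 V)} {v1 v2 v3 v4 : V}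
    (hdiag : ∀ e ∈ D, ¬ e.IsDiag)
    (hquad : ∀ v : V, v ∈ ({v1, v2, v3, v4} : Finset V) → (D.filter (fun e => v ∈ e)).card = 1)
    (hother : ∀ v : V, v ∉ ({v1, v2, v3, v4} : Finset V) →
      Even ((D.filter (fun e => v ∈ e)).card))
    (hnot12 : ¬ ConnIn D v1 v2)
    (h12 : v1 ≠ v2) (h13 : v1 ≠ v3) (h14 : v1 ≠ v4)
    (h23 : v2 ≠ v3) (h24 : v2 ≠ v4) (h34 : v3 ≠ v4) :
    (ConnIn D v1 v3 ∧ ¬ ConnIn D v1 v4) ∨ (ConnIn D v1 v4 ∧ ¬ ConnIn D v1 v3) := by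
  classical
  set D1 : Finset (Sym2 V) := D.filter (fun e => ∃ x ∈ e, ConnIn D x v1) with hD1
  have hD1sub : D1 ⊆ D := Finset.filter_subset _ _
  have hfilt_reach : ∀ y : V, ConnIn D y v1 →
      D1.filter (fun e => y ∈ e) = D.filter (fun e => y ∈ e) := by
    intro y hy
    ext a
    simp only [hD1, Finset.mem_filter]
    constructor
    · rintro ⟨⟨ha, _⟩, hya⟩; exact ⟨ha, hya⟩
    · rintro ⟨ha, hya⟩; exact ⟨⟨ha, ⟨y, hya, hy⟩⟩, hya⟩
  have hfilt_unreach : ∀ y : V, ¬ ConnIn D y v1 →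
      D1.filter (fun e => y ∈ e) = ∅ := by
    intro y hy
    rw [Finset.eq_empty_iff_forall_notMem]
    intro a ha
    simp only [hD1, Finset.mem_filter] at ha
    obtain ⟨⟨haD, x, hxa, hx⟩, hya⟩ := ha
    by_cases hxy : x = y
    · exact hy (hxy ▸ hx)
    · have : a = s(x, y) := (Sym2.mem_and_mem_iff hxy).mp ⟨hxa, hya⟩
      have hadj : ConnIn D y x := by
        apply connIn_of_mem _ (Ne.symm hxy)
        rw [Sym2.eq_swap] at this
        rwa [← this]
      exact hy (connIn_trans hadj hx)
  have hdegD1 : ∀ y : V, (SimpleGraph.fromEdgeSet (↑D1 : Set (Sym2 V))).degree y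
      = (D1.filter (fun e => y ∈ e)).card := by
    intro y
    exact deg_eq D1 (fun e he => hdiag e (hD1sub he)) y
  have heven := SimpleGraph.even_card_odd_degree_vertices
    (SimpleGraph.fromEdgeSet (↑D1 : Set (Sym2 V)))
  have hchar : ∀ v : V, v ∈ Finset.univ.filter
      (fun v => Odd ((SimpleGraph.fromEdgeSet (↑D1 : Set (Sym2 V))).degree v)) ↔
      (ConnIn D v v1 ∧ v ∈ ({v1, v2, v3, v4} : Finset V)) := by
    intro v
    rw [Finset.mem_filter, hdegD1]
    constructor
    · rintro ⟨_, hodd⟩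
      by_cases hr : ConnIn D v v1
      · refine ⟨hr, ?_⟩
        by_contra hq
        rw [hfilt_reach v hr] at hodd
        exact (Nat.not_even_iff_odd.mpr hodd) (hother v hq)
      · rw [hfilt_unreach v hr, Finset.card_empty, Nat.odd_iff] at hodd
        omega
    · rintro ⟨hr, hq⟩
      refine ⟨Finset.mem_univ _, ?_⟩
      rw [hfilt_reach v hr, hquad v hq]
      exact odd_one
  by_cases hc3 : ConnIn D v1 v3
  · by_cases hc4 : ConnIn D v1 v4
    · exfalso
      have hOset : Finset.univ.filter
          (fun v => Odd ((SimpleGraph.fromEdgeSet (↑D1 : Set (Sym2 V))).degree v))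
          = ({v1, v3, v4} : Finset V) := by
        ext v
        rw [hchar v]
        simp only [Finset.mem_insert, Finset.mem_singleton]
        constructor
        · rintro ⟨hr, hq⟩
          rcases hq with rfl | rfl | rfl | rfl
          · exact Or.inl rfl
          · exact absurd (connIn_symm hr) hnot12
          · exact Or.inr (Or.inl rfl)
          · exact Or.inr (Or.inr rfl)
        · rintro (rfl | rfl | rfl)
          · exact ⟨Reachable.refl _, by simp⟩
          · exact ⟨connIn_symm hc3, by simp⟩
          · exact ⟨connIn_symm hc4, by simp⟩
      rw [hOset] at heven
      have hcard : ({v1, v3, v4} : Finset V).card = 3 := by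
        rw [Finset.card_insert_of_notMem (by simp [h13, h14]),
          Finset.card_insert_of_notMem (by simp [h34]), Finset.card_singleton]
      rw [hcard, Nat.even_iff] at heven
      omega
    · exact Or.inl ⟨hc3, hc4⟩
  · by_cases hc4 : ConnIn D v1 v4
    · exact Or.inr ⟨hc4, hc3⟩
    · exfalso
      have hOset : Finset.univ.filter
          (fun v => Odd ((SimpleGraph.fromEdgeSet (↑D1 : Set (Sym2 V))).degree v))
          = ({v1} : Finset V) := by
        ext v
        rw [hchar v]
        simp only [Finset.mem_insert, Finset.mem_singleton]
        constructor
        · rintro ⟨hr, hq⟩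
          rcases hq with rfl | rfl | rfl | rfl
          · rfl
          · exact absurd (connIn_symm hr) hnot12
          · exact absurd (connIn_symm hr) hc3
          · exact absurd (connIn_symm hr) hc4
        · rintro rfl
          exact ⟨Reachable.refl _, by simp⟩
      rw [hOset, Finset.card_singleton, Nat.even_iff] at heven
      omega

lemma build {G : SimpleGraph V} {len : Sym2 V → ℝ}
    {C : Finset (Sym2 V)} (hC : IsTour G C) {v1 v2 v3 v4 : V}
    (h12 : v1 ≠ v2) (h13 : v1 ≠ v3) (h14 : v1 ≠ v4)
    (h23 : v2 ≠ v3) (h24 : v2 ≠ v4) (h34 : v3 ≠ v4)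
    (hv1 : v1 ∈ edgeVerts C) (hv2 : v2 ∈ edgeVerts C)
    (hv3 : v3 ∈ edgeVerts C) (hv4 : v4 ∈ edgeVerts C)
    (hE14 : s(v1, v4) ∈ G.edgeSet) (hE23 : s(v2, v3) ∈ G.edgeSet)
    (hcost : len s(v2, v3) + len s(v1, v4) < len s(v1, v2) + len s(v3, v4))
    (he12 : s(v1, v2) ∈ C) (he34 : s(v3, v4) ∈ C)
    (hA : ConnIn (C \ {s(v1, v2), s(v3, v4)}) v1 v3)
    (hn14 : s(v1, v4) ∉ C \ {s(v1, v2), s(v3, v4)})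
    (hn23 : s(v2, v3) ∉ C \ {s(v1, v2), s(v3, v4)}) :
    ∃ C' : Finset (Sym2 V), IsTour G C' ∧
      edgeVerts C' = edgeVerts C ∧
      (∑ e ∈ C', len e) < (∑ e ∈ C, len e) ∧
      ¬ (s(v1, v2) ∈ C' ∧ s(v3, v4) ∈ C') ∧
      C \ {s(v1, v2), s(v1, v3), s(v1, v4), s(v2, v3), s(v2, v4), s(v3, v4)}
        = C' \ {s(v1, v2), s(v1, v3), s(v1, v4), s(v2, v3), s(v2, v4), s(v3, v4)} := by
  obtain ⟨hsubG, hconn, hdeg2⟩ := hC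
  set D : Finset (Sym2 V) := C \ {s(v1, v2), s(v3, v4)} with hDdef
  have hDC : D ⊆ C := Finset.sdiff_subset
  have he12ne34 : s(v1, v2) ≠ s(v3, v4) := by
    intro h
    rcases Sym2.eq_iff.mp h with ⟨h1, _⟩ | ⟨h1, _⟩
    · exact h13 h1
    · exact h14 h1
  have he14ne23 : s(v1, v4) ≠ s(v2, v3) := by
    intro h
    rcases Sym2.eq_iff.mp h with ⟨h1, _⟩ | ⟨h1, _⟩
    · exact h12 h1
    · exact h13 h1
  set C' : Finset (Sym2 V) := insert s(v1, v4) (insert s(v2, v3) D) with hC'def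
  have hmemC' : ∀ e : Sym2 V, e ∈ C' ↔ e = s(v1, v4) ∨ e = s(v2, v3) ∨ e ∈ D := by
    intro e; simp [hC'def]
  have he12notC' : s(v1, v2) ∉ C' := by
    rw [hmemC']
    rintro (h | h | h)
    · rcases Sym2.eq_iff.mp h with ⟨_, h2⟩ | ⟨h1, _⟩
      · exact h24 h2
      · exact h14 h1
    · rcases Sym2.eq_iff.mp h with ⟨h1, _⟩ | ⟨h1, _⟩
      · exact h12 h1
      · exact h13 h1
    · exact (Finset.mem_sdiff.mp h).2 (by simp)
  -- edgeVerts equality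
  have hEV : edgeVerts C' = edgeVerts C := by
    ext v
    rw [mem_edgeVerts', mem_edgeVerts']
    constructor
    · rintro ⟨e, he, hv⟩
      rcases (hmemC' e).mp he with rfl | rfl | heD
      · rcases Sym2.mem_iff.mp hv with rfl | rfl
        · exact mem_edgeVerts'.mp hv1
        · exact mem_edgeVerts'.mp hv4
      · rcases Sym2.mem_iff.mp hv with rfl | rfl
        · exact mem_edgeVerts'.mp hv2
        · exact mem_edgeVerts'.mp hv3
      · exact ⟨e, hDC heD, hv⟩
    · rintro ⟨e, he, hv⟩
      by_cases h1 : e = s(v1, v2)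
      · subst h1
        rcases Sym2.mem_iff.mp hv with h | h
        · exact ⟨s(v1, v4), (hmemC' _).mpr (Or.inl rfl), by rw [h]; simp⟩
        · exact ⟨s(v2, v3), (hmemC' _).mpr (Or.inr (Or.inl rfl)), by rw [h]; simp⟩
      by_cases h2 : e = s(v3, v4)
      · subst h2
        rcases Sym2.mem_iff.mp hv with h | h
        · exact ⟨s(v2, v3), (hmemC' _).mpr (Or.inr (Or.inl rfl)), by rw [h]; simp⟩
        · exact ⟨s(v1, v4), (hmemC' _).mpr (Or.inl rfl), by rw [h]; simp⟩
      · exact ⟨e, (hmemC' _).mpr (Or.inr (Or.inr (Finset.mem_sdiff.mpr ⟨he, by simp [h1, h2]⟩))),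
          hv⟩
  refine ⟨C', ⟨?_, ?_, ?_⟩, hEV, ?_, ?_, ?_⟩
  -- subset of G's edges
  · intro e he
    rcases (hmemC' e).mp he with rfl | rfl | heD
    · exact hE14
    · exact hE23
    · exact hsubG (by exact_mod_cast hDC heD)
  -- connectivity
  · have hub : ∀ x ∈ edgeVerts C, ConnIn C' x v1 := by
      intro x hx
      have hxr : ConnIn C x v1 := hconn x hx v1 hv1
      have hstep := reach_aux (A := C) (B := D) (T := {v1, v2, v3, v4})
        (by
          intro e heC heD y hy
          have : e = s(v1, v2) ∨ e = s(v3, v4) := by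
            by_contra hcon
            push_neg at hcon
            exact heD (Finset.mem_sdiff.mpr ⟨heC, by simp [hcon.1, hcon.2]⟩)
          rcases this with rfl | rfl
          · rcases Sym2.mem_iff.mp hy with rfl | rfl <;> simp
          · rcases Sym2.mem_iff.mp hy with rfl | rfl <;> simp) hxr
      have hDsubC' : D ⊆ C' := fun e he => (hmemC' e).mpr (Or.inr (Or.inr he))
      have lift : ∀ {a b : V}, ConnIn D a b → ConnIn C' a b := fun h => connIn_mono hDsubC' h
      have h3to1 : ConnIn C' v3 v1 := lift (connIn_symm hA)
      have h4to1 : ConnIn C' v4 v1 :=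
        connIn_symm (connIn_of_mem ((hmemC' _).mpr (Or.inl rfl)) h14)
      have h2to1 : ConnIn C' v2 v1 :=
        connIn_trans (connIn_of_mem ((hmemC' _).mpr (Or.inr (Or.inl rfl))) h23) h3to1
      rcases hstep with h | ⟨t, ht, h⟩
      · exact lift h
      · rcases Finset.mem_insert.mp ht with rfl | ht
        · exact lift h
        rcases Finset.mem_insert.mp ht with rfl | ht
        · exact connIn_trans (lift h) h2to1
        rcases Finset.mem_insert.mp ht with rfl | ht
        · exact connIn_trans (lift h) h3to1
        rw [Finset.mem_singleton] at ht; subst ht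
        exact connIn_trans (lift h) h4to1
    intro u hu w hw
    rw [hEV] at hu hw
    exact connIn_trans (hub u hu) (connIn_symm (hub w hw))
  -- degrees
  · intro v hv
    rw [hEV] at hv
    have hfilt : C'.filter (fun e => v ∈ e)
        = (if v ∈ s(v1, v4) then {s(v1, v4)} else ∅)
          ∪ (if v ∈ s(v2, v3) then {s(v2, v3)} else ∅)
          ∪ D.filter (fun e => v ∈ e) := by
      ext a
      rw [Finset.mem_filter, hmemC']
      constructor
      · rintro ⟨rfl | rfl | haD, hva⟩
        · simp [hva]
        · simp only [Finset.mem_union]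
          exact Or.inl (Or.inr (by simp [hva]))
        · simp only [Finset.mem_union]
          exact Or.inr (Finset.mem_filter.mpr ⟨haD, hva⟩)
      · intro ha
        rcases Finset.mem_union.mp ha with ha | ha
        · rcases Finset.mem_union.mp ha with ha | ha
          · split at ha
            · rw [Finset.mem_singleton] at ha; subst ha
              exact ⟨Or.inl rfl, by assumption⟩
            · simp at ha
          · split at ha
            · rw [Finset.mem_singleton] at ha; subst ha
              exact ⟨Or.inr (Or.inl rfl), by assumption⟩
            · simp at ha
        · exact ⟨Or.inr (Or.inr (Finset.mem_filter.mp ha).1), (Finset.mem_filter.mp ha).2⟩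
    have hd1 : (D.filter (fun e => v1 ∈ e)).card = 1 :=
      degD C _ _ v1 he12 (by simp) (by simp [h13, h14]) (hdeg2 v1 hv1)
    have hd2 : (D.filter (fun e => v2 ∈ e)).card = 1 :=
      degD C _ _ v2 he12 (by simp) (by simp [h23, h24]) (hdeg2 v2 hv2)
    have hDalt : D = C \ {s(v3, v4), s(v1, v2)} := by rw [hDdef, Finset.pair_comm]
    have hd3 : (D.filter (fun e => v3 ∈ e)).card = 1 := by
      rw [hDalt]
      exact degD C _ _ v3 he34 (by simp) (by simp [Ne.symm h13, Ne.symm h23]) (hdeg2 v3 hv3)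
    have hd4 : (D.filter (fun e => v4 ∈ e)).card = 1 := by
      rw [hDalt]
      exact degD C _ _ v4 he34 (by simp) (by simp [Ne.symm h14, Ne.symm h24]) (hdeg2 v4 hv4)
    have hn14D : s(v1, v4) ∉ D.filter (fun e => v ∈ e) :=
      fun h => hn14 (Finset.mem_filter.mp h).1
    have hn23D : s(v2, v3) ∉ D.filter (fun e => v ∈ e) :=
      fun h => hn23 (Finset.mem_filter.mp h).1
    by_cases hq1 : v = v1
    · subst hq1
      rw [hfilt, if_pos (by simp), if_neg (by simp [h12, h13]), Finset.union_empty,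
        ← Finset.insert_eq, Finset.card_insert_of_notMem hn14D, hd1]
    by_cases hq4 : v = v4
    · subst hq4
      rw [hfilt, if_pos (by simp), if_neg (by simp [Ne.symm h24, Ne.symm h34]),
        Finset.union_empty, ← Finset.insert_eq, Finset.card_insert_of_notMem hn14D, hd4]
    by_cases hq2 : v = v2
    · subst hq2
      rw [hfilt, if_neg (by simp [Ne.symm h12, h24]), if_pos (by simp), Finset.empty_union,
        ← Finset.insert_eq, Finset.card_insert_of_notMem hn23D, hd2]
    by_cases hq3 : v = v3
    · subst hq3
      rw [hfilt, if_neg (by simp [Ne.symm h13, h34]), if_pos (by simp),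
        Finset.empty_union, ← Finset.insert_eq, Finset.card_insert_of_notMem hn23D, hd3]
    · rw [hfilt, if_neg (by simp [hq1, hq4]), if_neg (by simp [hq2, hq3]),
        Finset.empty_union, Finset.empty_union, hDdef,
        degD_other C _ _ v (by simp [hq1, hq2]) (by simp [hq3, hq4]), hdeg2 v hv]
  -- cost
  · have hpairsub : ({s(v1, v2), s(v3, v4)} : Finset (Sym2 V)) ⊆ C := by
      intro e he
      rcases Finset.mem_insert.mp he with rfl | he
      · exact he12
      · rw [Finset.mem_singleton] at he; subst he; exact he34
    have hsumC : (∑ e ∈ D, len e) + (len s(v1, v2) + len s(v3, v4)) = ∑ e ∈ C, len e := by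
      rw [hDdef, ← Finset.sum_pair he12ne34]
      exact Finset.sum_sdiff hpairsub
    have h14ni : s(v1, v4) ∉ insert s(v2, v3) D := by
      rw [Finset.mem_insert]
      rintro (h | h)
      · exact he14ne23 h
      · exact hn14 h
    have h23ni : s(v2, v3) ∉ D := hn23
    have hsumC' : (∑ e ∈ C', len e)
        = len s(v1, v4) + (len s(v2, v3) + ∑ e ∈ D, len e) := by
      rw [hC'def, Finset.sum_insert h14ni, Finset.sum_insert h23ni]
    rw [hsumC', ← hsumC]
    linarith
  -- not both
  · exact fun h => he12notC' h.1
  -- agreement outside the six edges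
  · ext e
    simp only [Finset.mem_sdiff, Finset.mem_insert, Finset.mem_singleton, hmemC' e, hDdef,
      Finset.mem_sdiff, Finset.mem_insert, Finset.mem_singleton]
    constructor
    · rintro ⟨heC, hne⟩
      push_neg at hne
      exact ⟨Or.inr (Or.inr ⟨heC, by tauto⟩), by tauto⟩
    · rintro ⟨h, hne⟩
      push_neg at hne
      rcases h with rfl | rfl | ⟨heC, _⟩
      · exact absurd rfl hne.2.2.1
      · exact absurd rfl hne.2.2.2.1
      · exact ⟨heC, by tauto⟩


/-- 2-OPT improvement: if the four distinct vertices v₁, v₂, v₃, v₄ of a tour C span all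
six edges in G, the pair {e₁₂, e₃₄} is strictly more expensive than both other opposite
pairs, and e₁₂, e₃₄ ∈ C, then there is a strictly cheaper tour C'\'' on the same vertices,
not containing both e₁₂ and e₃₄, agreeing with C outside the six edges. -/
theorem tour_two_opt_improvement
    (G : SimpleGraph V) (len : Sym2 V → ℝ) (hlen : ∀ e ∈ G.edgeSet, 0 ≤ len e)
    (C : Finset (Sym2 V)) (hC : IsTour G C)
    (v₁ v₂ v₃ v₄ : V)
    (h12 : v₁ ≠ v₂) (h13 : v₁ ≠ v₃) (h14 : v₁ ≠ v₄)
    (h23 : v₂ ≠ v₃) (h24 : v₂ ≠ v₄) (h34 : v₃ ≠ v₄)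
    (hv₁ : v₁ ∈ edgeVerts C) (hv₂ : v₂ ∈ edgeVerts C)
    (hv₃ : v₃ ∈ edgeVerts C) (hv₄ : v₄ ∈ edgeVerts C)
    (hE12 : s(v₁, v₂) ∈ G.edgeSet) (hE13 : s(v₁, v₃) ∈ G.edgeSet)
    (hE14 : s(v₁, v₄) ∈ G.edgeSet) (hE23 : s(v₂, v₃) ∈ G.edgeSet)
    (hE24 : s(v₂, v₄) ∈ G.edgeSet) (hE34 : s(v₃, v₄) ∈ G.edgeSet)
    (hc1 : len s(v₁, v₃) + len s(v₂, v₄) < len s(v₁, v₂) + len s(v₃, v₄))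
    (hc2 : len s(v₂, v₃) + len s(v₁, v₄) < len s(v₁, v₂) + len s(v₃, v₄))
    (he12 : s(v₁, v₂) ∈ C) (he34 : s(v₃, v₄) ∈ C) :
    ∃ C' : Finset (Sym2 V), IsTour G C' ∧
      edgeVerts C' = edgeVerts C ∧
      (∑ e ∈ C', len e) < (∑ e ∈ C, len e) ∧
      ¬ (s(v₁, v₂) ∈ C' ∧ s(v₃, v₄) ∈ C') ∧
      C \ {s(v₁, v₂), s(v₁, v₃), s(v₁, v₄), s(v₂, v₃), s(v₂, v₄), s(v₃, v₄)}
        = C' \ {s(v₁, v₂), s(v₁, v₃), s(v₁, v₄), s(v₂, v₃), s(v₂, v₄), s(v₃, v₄)} := by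
  obtain ⟨hsubG, hconn, hdeg2⟩ := hC
  set D : Finset (Sym2 V) := C \ {s(v₁, v₂), s(v₃, v₄)} with hDdef
  have hDC : D ⊆ C := Finset.sdiff_subset
  have hdiagD : ∀ e ∈ D, ¬ e.IsDiag := fun e he =>
    (SimpleGraph.not_isDiag_of_mem_edgeSet G (hsubG (by exact_mod_cast hDC he)))
  have hd1 : (D.filter (fun e => v₁ ∈ e)).card = 1 :=
    degD C _ _ v₁ he12 (by simp) (by simp [h13, h14]) (hdeg2 v₁ hv₁)
  have hd2 : (D.filter (fun e => v₂ ∈ e)).card = 1 :=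
    degD C _ _ v₂ he12 (by simp) (by simp [h23, h24]) (hdeg2 v₂ hv₂)
  have hDalt : D = C \ {s(v₃, v₄), s(v₁, v₂)} := by rw [hDdef, Finset.pair_comm]
  have hd3 : (D.filter (fun e => v₃ ∈ e)).card = 1 := by
    rw [hDalt]
    exact degD C _ _ v₃ he34 (by simp) (by simp [Ne.symm h13, Ne.symm h23]) (hdeg2 v₃ hv₃)
  have hd4 : (D.filter (fun e => v₄ ∈ e)).card = 1 := by
    rw [hDalt]
    exact degD C _ _ v₄ he34 (by simp) (by simp [Ne.symm h14, Ne.symm h24]) (hdeg2 v₄ hv₄)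
  have hquad : ∀ v : V, v ∈ ({v₁, v₂, v₃, v₄} : Finset V) →
      (D.filter (fun e => v ∈ e)).card = 1 := by
    intro v hv
    rcases Finset.mem_insert.mp hv with rfl | hv
    · exact hd1
    rcases Finset.mem_insert.mp hv with rfl | hv
    · exact hd2
    rcases Finset.mem_insert.mp hv with rfl | hv
    · exact hd3
    rw [Finset.mem_singleton] at hv; subst hv
    exact hd4
  have hother : ∀ v : V, v ∉ ({v₁, v₂, v₃, v₄} : Finset V) →
      Even ((D.filter (fun e => v ∈ e)).card) := by
    intro v hv
    simp only [Finset.mem_insert, Finset.mem_singleton] at hv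
    push_neg at hv
    obtain ⟨hq1, hq2, hq3, hq4⟩ := hv
    rw [hDdef, degD_other C _ _ v (by simp [hq1, hq2]) (by simp [hq3, hq4])]
    by_cases hev : v ∈ edgeVerts C
    · rw [hdeg2 v hev]; exact even_two
    · have : C.filter (fun e => v ∈ e) = ∅ := by
        rw [Finset.eq_empty_iff_forall_notMem]
        intro e he
        rw [Finset.mem_filter] at he
        exact hev (mem_edgeVerts'.mpr ⟨e, he.1, he.2⟩)
      rw [this, Finset.card_empty]
      exact Even.zero
  have he12D : s(v₁, v₂) ∉ D := by simp [hDdef]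
  have hnot12 : ¬ ConnIn D v₁ v₂ :=
    no_link hDC hdeg2 hconn hv₁ hv₂ hv₃ h12 (Ne.symm h13) (Ne.symm h23) he12 he12D hd3.le
  rcases pair_up hdiagD hquad hother hnot12 h12 h13 h14 h23 h24 h34 with ⟨hc3, hnc4⟩ | ⟨hc4, hnc3⟩
  · -- v₁ ~ v₃ in D: use edges (v₁,v₄), (v₂,v₃)
    have hn14 : s(v₁, v₄) ∉ D := fun h => hnc4 (connIn_of_mem h h14)
    have hn23 : s(v₂, v₃) ∉ D := fun h =>
      hnot12 (connIn_trans hc3 (connIn_symm (connIn_of_mem h h23)))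
    exact build ⟨hsubG, hconn, hdeg2⟩ h12 h13 h14 h23 h24 h34 hv₁ hv₂ hv₃ hv₄ hE14 hE23 hc2
      he12 he34 hc3 hn14 hn23
  · -- v₁ ~ v₄ in D: use edges (v₁,v₃), (v₂,v₄); swap roles of v₃ and v₄
    have hsw : s(v₄, v₃) = s(v₃, v₄) := Sym2.eq_swap
    have hn13 : s(v₁, v₃) ∉ D := fun h => hnc3 (connIn_of_mem h h13)
    have hn24 : s(v₂, v₄) ∉ D := fun h =>
      hnot12 (connIn_trans hc4 (connIn_symm (connIn_of_mem h h24)))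
    obtain ⟨C', htour, hEV, hsum, hnb, hsd⟩ :=
      build (v1 := v₁) (v2 := v₂) (v3 := v₄) (v4 := v₃) ⟨hsubG, hconn, hdeg2⟩
        h12 h14 h13 h24 h23 (Ne.symm h34) hv₁ hv₂ hv₄ hv₃ hE13 hE24
        (by rw [hsw]; linarith) he12 (by rw [hsw]; exact he34)
        (by rw [hsw]; exact hc4) (by rw [hsw]; exact hn13) (by rw [hsw]; exact hn24)
    refine ⟨C', htour, hEV, hsum, ?_, ?_⟩
    · rintro ⟨ha, hb⟩
      exact hnb ⟨ha, by rw [hsw]; exact hb⟩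
    · have hsix : ({s(v₁, v₂), s(v₁, v₄), s(v₁, v₃), s(v₂, v₄), s(v₂, v₃), s(v₄, v₃)} :
          Finset (Sym2 V))
          = {s(v₁, v₂), s(v₁, v₃), s(v₁, v₄), s(v₂, v₃), s(v₂, v₄), s(v₃, v₄)} := by
        rw [hsw]
        ext a
        simp only [Finset.mem_insert, Finset.mem_singleton]
        constructor <;> (rintro (h | h | h | h | h | h) <;> subst h <;> simp)
      rw [← hsix]
      exact hsd
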